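/- Let ξ̄ > 0 and let g : ℝ → ℝ be nondecreasing and Lipschitz continuous. Let U, V : [0,∞) × [0,ξ̄] → ℝ be continuous functions satisfying, for all t ≥ 0 and ξ ∈ [0,ξ̄], U(t,ξ) = U(0,ξ) + (1/2)∫₀^t ∫₀^ξ g(U(s,η)) dη ds and V(t,ξ) = V(0,ξ) + (1/2)∫₀^t ∫₀^ξ g(V(s,η)) dη ds. If U(0,ξ) ≤ V(0,ξ) for all ξ ∈ [0,ξ̄], then U(t,ξ) ≤ V(t,ξ) for all t ≥ 0 and all ξ ∈ [0,ξ̄]. -/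

import Mathlib

open MeasureTheory Set Real

/-- Comparison principle for the characteristic-variable integral equation
`U(t,ξ) = U(0,ξ) + (1/2)∫₀^t ∫₀^ξ g(U(s,η)) dη ds` with `g` nondecreasing and
Lipschitz: if `U(0,·) ≤ V(0,·)` on `[0,ξ̄]` then `U(t,·) ≤ V(t,·)` for all
`t ≥ 0`. -/
theorem stmt14 (ξbar : ℝ) (hξbar : 0 < ξbar)
    (g : ℝ → ℝ) (hgmono : Monotone g) (K : NNReal) (hgLip : LipschitzWith K g)
    (U V : ℝ → ℝ → ℝ)
    (hUcont : ContinuousOn (Function.uncurry U) (Set.Ici 0 ×ˢ Set.Icc 0 ξbar))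
    (hVcont : ContinuousOn (Function.uncurry V) (Set.Ici 0 ×ˢ Set.Icc 0 ξbar))
    (hUeq : ∀ t : ℝ, 0 ≤ t → ∀ ξ ∈ Set.Icc (0:ℝ) ξbar,
      U t ξ = U 0 ξ + (1 / 2) * ∫ s in (0:ℝ)..t, ∫ η in (0:ℝ)..ξ, g (U s η))
    (hVeq : ∀ t : ℝ, 0 ≤ t → ∀ ξ ∈ Set.Icc (0:ℝ) ξbar,
      V t ξ = V 0 ξ + (1 / 2) * ∫ s in (0:ℝ)..t, ∫ η in (0:ℝ)..ξ, g (V s η))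
    (hinit : ∀ ξ ∈ Set.Icc (0:ℝ) ξbar, U 0 ξ ≤ V 0 ξ) :
    ∀ t : ℝ, 0 ≤ t → ∀ ξ ∈ Set.Icc (0:ℝ) ξbar, U t ξ ≤ V t ξ := by
  intro t₀ ht₀ ξ₀ hξ₀
  -- clamping projection onto the domain
  set proj : ℝ × ℝ → ℝ × ℝ := fun p => (max p.1 0, min (max p.2 0) ξbar) with hprojdef
  have hprojcont : Continuous proj := by fun_prop
  have hmaps : ∀ p : ℝ × ℝ, proj p ∈ Set.Ici (0:ℝ) ×ˢ Set.Icc 0 ξbar := by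
    intro p
    simp only [hprojdef, Set.mem_prod, Set.mem_Ici, Set.mem_Icc]
    refine ⟨le_max_right _ _, le_min (le_max_right _ _) hξbar.le, min_le_right _ _⟩
  have hprojeq : ∀ s : ℝ, 0 ≤ s → ∀ η ∈ Set.Icc (0:ℝ) ξbar, proj (s, η) = (s, η) := by
    intro s hs η hη
    simp only [hprojdef, Prod.mk.injEq]
    exact ⟨max_eq_left hs, by rw [max_eq_left hη.1]; exact min_eq_left hη.2⟩
  set U' : ℝ → ℝ → ℝ := fun s η => (Function.uncurry U ∘ proj) (s, η) with hU'def
  set V' : ℝ → ℝ → ℝ := fun s η => (Function.uncurry V ∘ proj) (s, η) with hV'def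
  have hU'cont : Continuous (Function.uncurry U') :=
    hUcont.comp_continuous hprojcont hmaps
  have hV'cont : Continuous (Function.uncurry V') :=
    hVcont.comp_continuous hprojcont hmaps
  have hUU' : ∀ s : ℝ, 0 ≤ s → ∀ η ∈ Set.Icc (0:ℝ) ξbar, U' s η = U s η := by
    intro s hs η hη
    show Function.uncurry U (proj (s, η)) = U s η
    rw [hprojeq s hs η hη]
    rfl
  have hVV' : ∀ s : ℝ, 0 ≤ s → ∀ η ∈ Set.Icc (0:ℝ) ξbar, V' s η = V s η := by
    intro s hs η hη
    show Function.uncurry V (proj (s, η)) = V s η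
    rw [hprojeq s hs η hη]
    rfl
  -- bound on the difference on the compact rectangle
  obtain ⟨C₀, hC₀⟩ : ∃ C₀ : ℝ, ∀ p ∈ Set.Icc (0:ℝ) t₀ ×ˢ Set.Icc (0:ℝ) ξbar,
      ‖U' p.1 p.2 - V' p.1 p.2‖ ≤ C₀ := by
    apply IsCompact.exists_bound_of_continuousOn (isCompact_Icc.prod isCompact_Icc)
    exact (hU'cont.sub hV'cont).continuousOn
  set C : ℝ := max C₀ 0 with hCdef
  have hCnn : 0 ≤ C := le_max_right _ _
  set c : ℝ := (K : ℝ) * ξbar / 2 with hcdef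
  have hcnn : 0 ≤ c := by positivity
  -- continuity of the parametric inner integrals
  have hinner : ∀ ξ : ℝ, Continuous fun s => ∫ η in (0:ℝ)..ξ, (g (U' s η) - g (V' s η)) := by
    intro ξ
    apply intervalIntegral.continuous_parametric_intervalIntegral_of_continuous'
    exact (hgLip.continuous.comp hU'cont).sub (hgLip.continuous.comp hV'cont)
  -- the integral identity, in clamped form
  have hiter : ∀ t ∈ Set.Icc (0:ℝ) t₀, ∀ ξ ∈ Set.Icc (0:ℝ) ξbar,
      U' t ξ - V' t ξ = (U' 0 ξ - V' 0 ξ)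
        + (1/2) * ∫ s in (0:ℝ)..t, ∫ η in (0:ℝ)..ξ, (g (U' s η) - g (V' s η)) := by
    intro t ht ξ hξ
    have htnn : (0:ℝ) ≤ t := ht.1
    have hIccξ : Set.uIcc (0:ℝ) ξ ⊆ Set.Icc (0:ℝ) ξbar := by
      rw [Set.uIcc_of_le hξ.1]
      exact Set.Icc_subset_Icc le_rfl hξ.2
    have hcongrU : ∀ s : ℝ, 0 ≤ s →
        (∫ η in (0:ℝ)..ξ, g (U s η)) = ∫ η in (0:ℝ)..ξ, g (U' s η) := by
      intro s hs
      apply intervalIntegral.integral_congr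
      intro η hη
      show g (U s η) = g (U' s η)
      rw [hUU' s hs η (hIccξ hη)]
    have hcongrV : ∀ s : ℝ, 0 ≤ s →
        (∫ η in (0:ℝ)..ξ, g (V s η)) = ∫ η in (0:ℝ)..ξ, g (V' s η) := by
      intro s hs
      apply intervalIntegral.integral_congr
      intro η hη
      show g (V s η) = g (V' s η)
      rw [hVV' s hs η (hIccξ hη)]
    have hIU : (∫ s in (0:ℝ)..t, ∫ η in (0:ℝ)..ξ, g (U s η))
        = ∫ s in (0:ℝ)..t, ∫ η in (0:ℝ)..ξ, g (U' s η) := by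
      apply intervalIntegral.integral_congr
      intro s hs
      rw [Set.uIcc_of_le htnn] at hs
      exact hcongrU s hs.1
    have hIV : (∫ s in (0:ℝ)..t, ∫ η in (0:ℝ)..ξ, g (V s η))
        = ∫ s in (0:ℝ)..t, ∫ η in (0:ℝ)..ξ, g (V' s η) := by
      apply intervalIntegral.integral_congr
      intro s hs
      rw [Set.uIcc_of_le htnn] at hs
      exact hcongrV s hs.1
    have hFU : Continuous fun s => ∫ η in (0:ℝ)..ξ, g (U' s η) := by
      apply intervalIntegral.continuous_parametric_intervalIntegral_of_continuous'
      exact hgLip.continuous.comp hU'cont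
    have hFV : Continuous fun s => ∫ η in (0:ℝ)..ξ, g (V' s η) := by
      apply intervalIntegral.continuous_parametric_intervalIntegral_of_continuous'
      exact hgLip.continuous.comp hV'cont
    have hsub : (∫ s in (0:ℝ)..t, ∫ η in (0:ℝ)..ξ, g (U' s η))
        - (∫ s in (0:ℝ)..t, ∫ η in (0:ℝ)..ξ, g (V' s η))
        = ∫ s in (0:ℝ)..t, ((∫ η in (0:ℝ)..ξ, g (U' s η)) - ∫ η in (0:ℝ)..ξ, g (V' s η)) := by
      rw [intervalIntegral.integral_sub (hFU.intervalIntegrable _ _) (hFV.intervalIntegrable _ _)]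
    have hsubinner : ∀ s : ℝ,
        ((∫ η in (0:ℝ)..ξ, g (U' s η)) - ∫ η in (0:ℝ)..ξ, g (V' s η))
        = ∫ η in (0:ℝ)..ξ, (g (U' s η) - g (V' s η)) := by
      intro s
      rw [intervalIntegral.integral_sub]
      · exact (hgLip.continuous.comp (hU'cont.comp
          (Continuous.prodMk_right s))).intervalIntegrable _ _
      · exact (hgLip.continuous.comp (hV'cont.comp
          (Continuous.prodMk_right s))).intervalIntegrable _ _
    have hUt := hUeq t htnn ξ hξ
    have hVt := hVeq t htnn ξ hξ
    rw [hUU' t htnn ξ hξ, hVV' t htnn ξ hξ, hUU' 0 le_rfl ξ hξ, hVV' 0 le_rfl ξ hξ,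
      hUt, hVt, hIU, hIV]
    have : (∫ s in (0:ℝ)..t,
        ((∫ η in (0:ℝ)..ξ, g (U' s η)) - ∫ η in (0:ℝ)..ξ, g (V' s η)))
        = ∫ s in (0:ℝ)..t, ∫ η in (0:ℝ)..ξ, (g (U' s η) - g (V' s η)) := by
      apply intervalIntegral.integral_congr
      intro s _
      exact hsubinner s
    rw [← this, ← hsub]
    ring
  -- main induction
  have key : ∀ n : ℕ, ∀ t ∈ Set.Icc (0:ℝ) t₀, ∀ ξ ∈ Set.Icc (0:ℝ) ξbar,
      U' t ξ - V' t ξ ≤ C * (c * t) ^ n / n.factorial := by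
    intro n
    induction n with
    | zero =>
      intro t ht ξ hξ
      have h := hC₀ (t, ξ) ⟨ht, hξ⟩
      rw [Real.norm_eq_abs] at h
      have h2 : U' t ξ - V' t ξ ≤ C₀ := le_of_abs_le h
      simp only [pow_zero, Nat.factorial_zero, Nat.cast_one, mul_one, div_one]
      exact h2.trans (le_max_left _ _)
    | succ n ih =>
      intro t ht ξ hξ
      have htnn : (0:ℝ) ≤ t := ht.1
      rw [hiter t ht ξ hξ]
      have hinit' : U' 0 ξ - V' 0 ξ ≤ 0 := by
        rw [hUU' 0 le_rfl ξ hξ, hVV' 0 le_rfl ξ hξ]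
        linarith [hinit ξ hξ]
      -- pointwise bound on the integrand
      have hpt : ∀ s ∈ Set.Icc (0:ℝ) t, ∀ η ∈ Set.Icc (0:ℝ) ξ,
          g (U' s η) - g (V' s η) ≤ (K : ℝ) * (C * (c * s) ^ n / n.factorial) := by
        intro s hs η hη
        have hsnn : (0:ℝ) ≤ s := hs.1
        have hst₀ : s ∈ Set.Icc (0:ℝ) t₀ := ⟨hsnn, hs.2.trans ht.2⟩
        have hηb : η ∈ Set.Icc (0:ℝ) ξbar := ⟨hη.1, hη.2.trans hξ.2⟩
        have hIH := ih s hst₀ η hηb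
        have hrhsnn : 0 ≤ (K : ℝ) * (C * (c * s) ^ n / n.factorial) := by positivity
        rcases le_or_gt (U' s η) (V' s η) with h | h
        · exact le_trans (by linarith [hgmono h]) hrhsnn
        · have hlip := hgLip.dist_le_mul (U' s η) (V' s η)
          rw [Real.dist_eq, Real.dist_eq] at hlip
          have : g (U' s η) - g (V' s η) ≤ (K : ℝ) * (U' s η - V' s η) := by
            calc g (U' s η) - g (V' s η) ≤ |g (U' s η) - g (V' s η)| := le_abs_self _
              _ ≤ (K : ℝ) * |U' s η - V' s η| := hlip
              _ = (K : ℝ) * (U' s η - V' s η) := by rw [abs_of_pos (by linarith)]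
          calc g (U' s η) - g (V' s η) ≤ (K : ℝ) * (U' s η - V' s η) := this
            _ ≤ (K : ℝ) * (C * (c * s) ^ n / n.factorial) := by
                apply mul_le_mul_of_nonneg_left hIH (K.coe_nonneg)
      -- bound on the inner integral
      have hinnerbd : ∀ s ∈ Set.Icc (0:ℝ) t,
          (∫ η in (0:ℝ)..ξ, (g (U' s η) - g (V' s η)))
            ≤ ξbar * ((K : ℝ) * (C * (c * s) ^ n / n.factorial)) := by
        intro s hs
        have hsnn : (0:ℝ) ≤ s := hs.1
        have h1 : (∫ η in (0:ℝ)..ξ, (g (U' s η) - g (V' s η)))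
            ≤ ∫ _η in (0:ℝ)..ξ, (K : ℝ) * (C * (c * s) ^ n / n.factorial) := by
          apply intervalIntegral.integral_mono_on hξ.1
          · exact (((hgLip.continuous.comp (hU'cont.comp (Continuous.prodMk_right s))).sub
              (hgLip.continuous.comp (hV'cont.comp
                (Continuous.prodMk_right s))))).intervalIntegrable _ _
          · exact intervalIntegrable_const
          · exact hpt s hs
        rw [intervalIntegral.integral_const, smul_eq_mul, sub_zero] at h1
        refine h1.trans ?_
        apply mul_le_mul_of_nonneg_right hξ.2 (by positivity)
      -- bound on the outer integral
      have houter : (∫ s in (0:ℝ)..t, ∫ η in (0:ℝ)..ξ, (g (U' s η) - g (V' s η)))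
          ≤ ∫ s in (0:ℝ)..t, ξbar * ((K : ℝ) * (C * (c * s) ^ n / n.factorial)) := by
        apply intervalIntegral.integral_mono_on htnn
        · exact (hinner ξ).intervalIntegrable _ _
        · apply Continuous.intervalIntegrable
          fun_prop
        · exact hinnerbd
      have hval : (∫ s in (0:ℝ)..t, ξbar * ((K : ℝ) * (C * (c * s) ^ n / n.factorial)))
          = ξbar * (K : ℝ) * C * c ^ n / n.factorial * (t ^ (n + 1) / (n + 1)) := by
        have : ∀ s : ℝ, ξbar * ((K : ℝ) * (C * (c * s) ^ n / n.factorial))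
            = (ξbar * (K : ℝ) * C * c ^ n / n.factorial) * s ^ n := by
          intro s; rw [mul_pow]; ring
        simp_rw [this]
        rw [intervalIntegral.integral_const_mul, integral_pow]
        ring
      have hfinal : (1:ℝ)/2 * (ξbar * (K : ℝ) * C * c ^ n / n.factorial * (t ^ (n + 1) / (n + 1)))
          = C * (c * t) ^ (n + 1) / (n + 1).factorial := by
        rw [Nat.factorial_succ, mul_pow, hcdef]
        field_simp
        push_cast
        ring
      calc U' 0 ξ - V' 0 ξ + 1 / 2 * ∫ s in (0:ℝ)..t, ∫ η in (0:ℝ)..ξ,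
              (g (U' s η) - g (V' s η))
          ≤ 0 + 1 / 2 * (ξbar * (K : ℝ) * C * c ^ n / n.factorial * (t ^ (n + 1) / (n + 1))) := by
            have := houter.trans_eq hval
            nlinarith [this, hinit']
        _ = C * (c * t) ^ (n + 1) / (n + 1).factorial := by rw [zero_add, hfinal]
  -- pass to the limit
  have hlim : Filter.Tendsto (fun n : ℕ => C * (c * t₀) ^ n / n.factorial)
      Filter.atTop (nhds 0) := by
    have := (FloorSemiring.tendsto_pow_div_factorial_atTop (K := ℝ) (c * t₀)).const_mul C
    simpa [mul_div_assoc] using this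
  have hle : U' t₀ ξ₀ - V' t₀ ξ₀ ≤ 0 := by
    apply ge_of_tendsto hlim
    filter_upwards with n
    exact key n t₀ ⟨ht₀, le_rfl⟩ ξ₀ hξ₀
  rw [hUU' t₀ ht₀ ξ₀ hξ₀, hVV' t₀ ht₀ ξ₀ hξ₀] at hle
  linarith
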